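/- For 0 ≤ i ≤ d, both (𝓜 − q^{d−2i}I)U_i ⊆ U_0 + U_1 + ⋯ + U_{i−1} and (𝓜 − q^{d−2i}I)U_i^↓ ⊆ U_0^↓ + U_1^↓ + ⋯ + U_{i−1}^↓. -/

import Mathlib

section Aux

variable {𝕂 : Type*} [Field 𝕂] {V : Type*} [AddCommGroup V] [Module 𝕂 V]

/-- Geometric series formula for the inverse of `1 - c • ψ` when `ψ` is nilpotent. -/
lemma aux_inv_series (d : ℕ) (ψ : Module.End 𝕂 V) (hψnil : ψ ^ (d + 1) = 0) (c : 𝕂) :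
    Ring.inverse (1 - c • ψ) = ∑ k ∈ Finset.range (d + 1), c ^ k • ψ ^ k := by
  set S : Module.End 𝕂 V := ∑ k ∈ Finset.range (d + 1), c ^ k • ψ ^ k with hS
  have hkey : ∀ k : ℕ, (c • ψ) * (c ^ k • ψ ^ k) = c ^ (k + 1) • ψ ^ (k + 1) := by
    intro k
    rw [smul_mul_smul_comm, ← pow_succ', ← pow_succ']
  have hkey' : ∀ k : ℕ, (c ^ k • ψ ^ k) * (c • ψ) = c ^ (k + 1) • ψ ^ (k + 1) := by
    intro k
    rw [smul_mul_smul_comm, ← pow_succ, ← pow_succ]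
  have hsum : (∑ k ∈ Finset.range (d + 1), c ^ (k + 1) • ψ ^ (k + 1))
      - ∑ k ∈ Finset.range (d + 1), c ^ k • ψ ^ k = -1 := by
    rw [← Finset.sum_sub_distrib, Finset.sum_range_sub (fun k => c ^ k • ψ ^ k) (d + 1),
      hψnil, smul_zero, pow_zero, pow_zero, one_smul, zero_sub]
  have hsum' : (∑ k ∈ Finset.range (d + 1), c ^ k • ψ ^ k)
      - ∑ k ∈ Finset.range (d + 1), c ^ (k + 1) • ψ ^ (k + 1) = 1 := by
    rw [← neg_sub, hsum, neg_neg]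
  have hmul : (1 - c • ψ) * S = 1 := by
    rw [sub_mul, one_mul, hS, Finset.mul_sum]
    have : ∑ k ∈ Finset.range (d + 1), (c • ψ) * (c ^ k • ψ ^ k)
        = ∑ k ∈ Finset.range (d + 1), c ^ (k + 1) • ψ ^ (k + 1) :=
      Finset.sum_congr rfl fun k _ => hkey k
    rw [this, hsum']
  have hmul' : S * (1 - c • ψ) = 1 := by
    rw [mul_sub, mul_one, hS, Finset.sum_mul]
    have : ∑ k ∈ Finset.range (d + 1), (c ^ k • ψ ^ k) * (c • ψ)
        = ∑ k ∈ Finset.range (d + 1), c ^ (k + 1) • ψ ^ (k + 1) :=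
      Finset.sum_congr rfl fun k _ => hkey' k
    rw [this, hsum']
  let u : (Module.End 𝕂 V)ˣ := ⟨1 - c • ψ, S, hmul, hmul'⟩
  have : Ring.inverse (u : Module.End 𝕂 V) = (↑u⁻¹ : Module.End 𝕂 V) := Ring.inverse_unit u
  simpa [u] using this

/-- `ψ` commutes with the inverse of `1 - c • ψ`. -/
lemma aux_psi_comm (d : ℕ) (ψ : Module.End 𝕂 V) (hψnil : ψ ^ (d + 1) = 0) (c : 𝕂) :
    ψ * Ring.inverse (1 - c • ψ) = Ring.inverse (1 - c • ψ) * ψ := by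
  rw [aux_inv_series d ψ hψnil c, Finset.mul_sum, Finset.sum_mul]
  refine Finset.sum_congr rfl fun k _ => ?_
  rw [mul_smul_comm, smul_mul_assoc, ← pow_succ, ← pow_succ']

/-- Powers of `ψ` lower the index of the decomposition. -/
lemma aux_pow_mem (d : ℕ) (ψ : Module.End 𝕂 V) (W : ℕ → Submodule 𝕂 V)
    (h0 : ∀ v ∈ W 0, ψ v = 0)
    (hW : ∀ i, 1 ≤ i → i ≤ d → ∀ v ∈ W i, ψ v ∈ W (i - 1))
    (i : ℕ) (hi : i ≤ d) (v : V) (hv : v ∈ W i) (m : ℕ) :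
    (ψ ^ m) v ∈ W (i - m) ∨ (ψ ^ m) v = 0 := by
  induction m with
  | zero => left; simpa using hv
  | succ m ih =>
    have hstep : (ψ ^ (m + 1)) v = ψ ((ψ ^ m) v) := by
      rw [pow_succ']; rfl
    rcases ih with h | h
    · by_cases him : i - m = 0
      · right
        rw [hstep]
        exact h0 _ (him ▸ h)
      · left
        have h1 : 1 ≤ i - m := Nat.one_le_iff_ne_zero.mpr him
        have h2 : i - m ≤ d := le_trans (Nat.sub_le _ _) hi
        have := hW (i - m) h1 h2 _ h
        rw [hstep]
        have : ψ ((ψ ^ m) v) ∈ W (i - m - 1) := this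
        rwa [Nat.sub_sub] at this
    · right
      rw [hstep, h, map_zero]

/-- Key membership: `ψ ∘ (1 - c•ψ)⁻¹` maps `W i` into `W 0 + ⋯ + W (i-1)`. -/
lemma aux_key (d : ℕ) (ψ : Module.End 𝕂 V) (hψnil : ψ ^ (d + 1) = 0) (c : 𝕂)
    (W : ℕ → Submodule 𝕂 V)
    (h0 : ∀ v ∈ W 0, ψ v = 0)
    (hW : ∀ i, 1 ≤ i → i ≤ d → ∀ v ∈ W i, ψ v ∈ W (i - 1))
    (i : ℕ) (hi : i ≤ d) (v : V) (hv : v ∈ W i) :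
    ψ (Ring.inverse (1 - c • ψ) v) ∈ ∑ j ∈ Finset.range i, W j := by
  rw [aux_inv_series d ψ hψnil c]
  have happ : (∑ k ∈ Finset.range (d + 1), c ^ k • ψ ^ k) v
      = ∑ k ∈ Finset.range (d + 1), c ^ k • ((ψ ^ k) v) := by
    simp [LinearMap.sum_apply]
  rw [happ, map_sum]
  refine Submodule.sum_mem _ fun k _ => ?_
  rw [map_smul]
  refine Submodule.smul_mem _ _ ?_
  have hstep : ψ ((ψ ^ k) v) = (ψ ^ (k + 1)) v := by rw [pow_succ']; rfl
  rw [hstep]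
  rcases aux_pow_mem d ψ W h0 hW i hi v hv (k + 1) with h | h
  · -- ψ^(k+1) v ∈ W (i - (k+1)); if it's nonzero we must have k+1 ≤ i, but handle both cases
    by_cases hik : k + 1 ≤ i
    · have hj : i - (k + 1) < i := by omega
      have hle : W (i - (k + 1)) ≤ ∑ j ∈ Finset.range i, W j :=
        Finset.single_le_sum (f := W) (fun j _ => zero_le) (Finset.mem_range.mpr hj)
      exact hle h
    · -- k + 1 > i : then ψ^(k+1) v = 0 since repeated application kills it
      -- i - (k+1) = 0, so ψ^(k+1) v ∈ W 0; apply ψ^0? We instead show it directly: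
      -- from aux_pow_mem at m = i we get membership in W 0, then one more ψ gives 0.
      have hik' : i < k + 1 := by omega
      -- ψ^(i+1) v = 0 or in W 0... use: ψ^(k+1) v = ψ^(k+1-i-1) (ψ^(i+1) v)? messy; instead:
      -- Show ψ^(k+1) v = 0 by strong claim below.
      have hz1 : (ψ ^ (i + 1)) v = 0 := by
        have hstep' : (ψ ^ (i + 1)) v = ψ ((ψ ^ i) v) := by rw [pow_succ']; rfl
        rcases aux_pow_mem d ψ W h0 hW i hi v hv i with h' | h'
        · rw [hstep']
          have hii : i - i = 0 := Nat.sub_self i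
          exact h0 _ (hii ▸ h')
        · rw [hstep', h', map_zero]
      have hdec : (ψ ^ (k + 1)) v = (ψ ^ (k - i)) ((ψ ^ (i + 1)) v) := by
        rw [← Module.End.mul_apply, ← pow_add]
        congr 2
        omega
      rw [hdec, hz1, map_zero]
      exact Submodule.zero_mem _
  · rw [h]; exact Submodule.zero_mem _

end Aux

theorem stmt_18
    {𝕂 : Type*} [Field 𝕂] {V : Type*} [AddCommGroup V] [Module 𝕂 V]
    [FiniteDimensional 𝕂 V]
    (d : ℕ) (hd : 1 ≤ d) (q a : 𝕂) (hq : q ≠ 0) (ha : a ≠ 0)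
    (hq2 : ∀ i : ℕ, 1 ≤ i → i ≤ d → q ^ (2 * i) ≠ 1)
    (ha2 : ∀ i : ℤ, 1 - (d : ℤ) ≤ i → i ≤ (d : ℤ) - 1 → a ^ 2 ≠ q ^ (2 * i))
    (K : Module.End 𝕂 V) (hK : IsUnit K)
    (U : ℕ → Submodule 𝕂 V)
    (hUne : ∀ i, i ≤ d → U i ≠ ⊥)
    (hUint : DirectSum.IsInternal (fun i : Fin (d + 1) => U i.1))
    (hKU : ∀ i, i ≤ d → ∀ v ∈ U i, K v = (q ^ ((d : ℤ) - 2 * (i : ℤ))) • v)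
    (ψ : Module.End 𝕂 V)
    (hψ0 : ∀ v ∈ U 0, ψ v = 0)
    (hψU : ∀ i, 1 ≤ i → i ≤ d → ∀ v ∈ U i, ψ v ∈ U (i - 1))
    (hψnil : ψ ^ (d + 1) = 0)
    (hKψ : K * ψ = q ^ 2 • (ψ * K))
    (hinv : ∀ x : 𝕂, IsUnit (1 - x • ψ))
    (B : Module.End 𝕂 V)
    (hB : B = (1 - (a * q) • ψ) * Ring.inverse (1 - (a⁻¹ * q) • ψ) * K)
    (M : Module.End 𝕂 V)
    (hM : M = (a - a⁻¹)⁻¹ • (a • K - a⁻¹ • B))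
    (hMunit : IsUnit M)
    (Ud : ℕ → Submodule 𝕂 V)
    (hUdne : ∀ i, i ≤ d → Ud i ≠ ⊥)
    (hUdint : DirectSum.IsInternal (fun i : Fin (d + 1) => Ud i.1))
    (hBUd : ∀ i, i ≤ d → ∀ v ∈ Ud i, B v = (q ^ ((d : ℤ) - 2 * (i : ℤ))) • v)
    (hψ0d : ∀ v ∈ Ud 0, ψ v = 0)
    (hψUd : ∀ i, 1 ≤ i → i ≤ d → ∀ v ∈ Ud i, ψ v ∈ Ud (i - 1)):
    ∀ i, i ≤ d →
      Submodule.map (M - (q ^ ((d : ℤ) - 2 * (i : ℤ))) • 1) (U i)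
        ≤ (∑ j ∈ Finset.range i, U j) ∧
      Submodule.map (M - (q ^ ((d : ℤ) - 2 * (i : ℤ))) • 1) (Ud i)
        ≤ ∑ j ∈ Finset.range i, Ud j := by
  -- a - a⁻¹ ≠ 0
  have haa : a ^ 2 ≠ 1 := by
    have := ha2 0 (by omega) (by omega)
    simpa using this
  have hsub : a - a⁻¹ ≠ 0 := by
    intro h
    apply haa
    have h' : a = a⁻¹ := sub_eq_zero.mp h
    field_simp at h'
    rw [sq]; linear_combination h'
  have hne : -a + a ^ 3 ≠ 0 := by
    intro h
    apply haa
    have h2 : a * (a ^ 2 - 1) = 0 := by linear_combination h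
    rcases mul_eq_zero.mp h2 with h3 | h3
    · exact absurd h3 ha
    · linear_combination h3
  intro i hi
  set lam : 𝕂 := q ^ ((d : ℤ) - 2 * (i : ℤ)) with hlam
  constructor
  · -- U case
    rintro x ⟨v, hv, rfl⟩
    set R : Module.End 𝕂 V := Ring.inverse (1 - (a⁻¹ * q) • ψ) with hR
    set w : V := R v with hwdef
    have h1 : (1 - (a⁻¹ * q) • ψ) * R = 1 := Ring.mul_inverse_cancel _ (hinv (a⁻¹ * q))
    have hw : w - (a⁻¹ * q) • ψ w = v := by
      have := LinearMap.congr_fun h1 v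
      simpa [Module.End.mul_apply, LinearMap.sub_apply, LinearMap.smul_apply, hwdef] using this
    have hKv : K v = lam • v := hKU i hi v hv
    have hBv : B v = lam • (w - (a * q) • ψ w) := by
      rw [hB]
      show ((1 - (a * q) • ψ) * R) (K v) = _
      rw [hKv, map_smul]
      have h2 : ((1 - (a * q) • ψ) * R) v = w - (a * q) • ψ w := by
        simp [Module.End.mul_apply, LinearMap.sub_apply, LinearMap.smul_apply, hwdef]
      rw [h2]
    have hM' : (a - a⁻¹) • M = a • K - a⁻¹ • B := by
      rw [hM, smul_smul, mul_inv_cancel₀ hsub, one_smul]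
    have hMv0 : (a - a⁻¹) • M v = a • K v - a⁻¹ • B v := by
      have := LinearMap.congr_fun hM' v
      simpa [LinearMap.smul_apply, LinearMap.sub_apply] using this
    have hMv : (M - lam • 1) v = (a⁻¹ * q * lam) • ψ w := by
      apply smul_right_injective V hsub
      show (a - a⁻¹) • ((M - lam • 1) v) = (a - a⁻¹) • ((a⁻¹ * q * lam) • ψ w)
      rw [LinearMap.sub_apply, LinearMap.smul_apply, Module.End.one_apply, smul_sub, hMv0,
        hKv, hBv, ← hw]
      match_scalars <;> field_simp <;> ring
    rw [hMv]
    exact Submodule.smul_mem _ _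
      (aux_key d ψ hψnil (a⁻¹ * q) U hψ0 hψU i hi v hv)
  · -- Ud case
    rintro x ⟨v, hv, rfl⟩
    set R : Module.End 𝕂 V := Ring.inverse (1 - (a * q) • ψ) with hR
    set w : V := R v with hwdef
    have h1 : (1 - (a * q) • ψ) * R = 1 := Ring.mul_inverse_cancel _ (hinv (a * q))
    have h1' : R * (1 - (a * q) • ψ) = 1 := Ring.inverse_mul_cancel _ (hinv (a * q))
    have hw : w - (a * q) • ψ w = v := by
      have := LinearMap.congr_fun h1 v
      simpa [Module.End.mul_apply, LinearMap.sub_apply, LinearMap.smul_apply, hwdef] using this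
    have hBv : B v = lam • v := hBUd i hi v hv
    -- operator identity: (1 - a⁻¹q ψ) * B = (1 - aq ψ) * K
    have hcommS : ((a⁻¹ * q) • ψ) * ((a * q) • ψ) = ((a * q) • ψ) * ((a⁻¹ * q) • ψ) :=
      (((Commute.refl ψ).smul_left (a * q)).smul_right (a⁻¹ * q)).symm
    have hcomm : (1 - (a⁻¹ * q) • ψ) * (1 - (a * q) • ψ)
        = (1 - (a * q) • ψ) * (1 - (a⁻¹ * q) • ψ) := by
      have c1 : Commute ((a⁻¹ * q) • ψ) (1 - (a * q) • ψ) :=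
        (Commute.one_right _).sub_right (((Commute.refl ψ).smul_left (a * q)).smul_right (a⁻¹ * q)).symm
      have c2 : Commute (1 - (a⁻¹ * q) • ψ) (1 - (a * q) • ψ) :=
        (Commute.one_left _).sub_left c1
      exact c2
    have hop : (1 - (a⁻¹ * q) • ψ) * B = (1 - (a * q) • ψ) * K := by
      rw [hB, ← mul_assoc, ← mul_assoc, hcomm, mul_assoc (1 - (a * q) • ψ),
        Ring.mul_inverse_cancel _ (hinv (a⁻¹ * q)), mul_one]
    -- hence K = R * (1 - a⁻¹q ψ) * B
    have hKop : K = R * ((1 - (a⁻¹ * q) • ψ) * B) := by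
      rw [hop, ← mul_assoc, h1', one_mul]
    have hpsicomm : ψ * R = R * ψ := by
      rw [hR]; exact aux_psi_comm d ψ hψnil (a * q)
    have hRψv : R (ψ v) = ψ w := by
      have := LinearMap.congr_fun hpsicomm v
      simpa [Module.End.mul_apply, hwdef] using this.symm
    have hKv : K v = lam • (w - (a⁻¹ * q) • ψ w) := by
      rw [hKop]
      show R ((1 - (a⁻¹ * q) • ψ) (B v)) = _
      rw [hBv, map_smul, map_smul]
      congr 1
      have : ((1 - (a⁻¹ * q) • ψ) : Module.End 𝕂 V) v = v - (a⁻¹ * q) • ψ v := by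
        simp [LinearMap.sub_apply, LinearMap.smul_apply]
      rw [this, map_sub, map_smul, hRψv, ← hwdef]
    have hM' : (a - a⁻¹) • M = a • K - a⁻¹ • B := by
      rw [hM, smul_smul, mul_inv_cancel₀ hsub, one_smul]
    have hMv0 : (a - a⁻¹) • M v = a • K v - a⁻¹ • B v := by
      have := LinearMap.congr_fun hM' v
      simpa [LinearMap.smul_apply, LinearMap.sub_apply] using this
    have hMv : (M - lam • 1) v = (a * q * lam) • ψ w := by
      apply smul_right_injective V hsub
      show (a - a⁻¹) • ((M - lam • 1) v) = (a - a⁻¹) • ((a * q * lam) • ψ w)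
      rw [LinearMap.sub_apply, LinearMap.smul_apply, Module.End.one_apply, smul_sub, hMv0,
        hKv, hBv, ← hw]
      match_scalars <;> field_simp <;> ring
    rw [hMv]
    exact Submodule.smul_mem _ _
      (aux_key d ψ hψnil (a * q) Ud hψ0d hψUd i hi v hv)
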